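/- Let G = Q8 × Z/2Z with generating set S = {(±i, 1), (±j, 1), (±ij, 1)}, and let φ_0 = id and φ_1 be inversion on Q8 (both in ξ_{Q8}). Then the map φ(x, ε) = (φ_ε(x), ε) belongs to ξ_{S^{≤2}} but does not belong to ξ_G; in particular ξ_{S^{≤2}} ≠ ξ_G. -/
import Mathlib


open Pointwise

/-- Identify `Q₈ = QuaternionGroup 2` (with `±i = a 1, a 3`, `±j = xa 0, xa 2`,
`±ij = xa 3, xa 1`) and `ℤ/2ℤ` written multiplicatively. The generating set
`S = {(±i,1), (±j,1), (±ij,1)}` of `G = Q₈ × ℤ/2ℤ`. -/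
def SQ8 : Set (QuaternionGroup 2 × Multiplicative (ZMod 2)) :=
  {p | p.2 = Multiplicative.ofAdd 1 ∧
    (p.1 = .a 1 ∨ p.1 = .a 3 ∨ p.1 = .xa 0 ∨ p.1 = .xa 2 ∨ p.1 = .xa 1 ∨ p.1 = .xa 3)}

/-- The map `φ(x, ε) = (φ_ε x, ε)` where `φ_0 = id` and `φ_1` is inversion on `Q₈`;
it is an involution, hence a permutation. -/
def phiExample : Equiv.Perm (QuaternionGroup 2 × Multiplicative (ZMod 2)) :=
  Function.Involutive.toPerm
    (fun p => (if p.2 = Multiplicative.ofAdd 1 then p.1⁻¹ else p.1, p.2))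
    (by intro p; by_cases h : p.2 = Multiplicative.ofAdd 1 <;> simp [h, Prod.ext_iff, eq_comm])

/-- `φ` belongs to `ξ_{S^{≤2}}` but not to `ξ_G`; in particular `ξ_{S^{≤2}} ≠ ξ_G`. -/
theorem xi_Ssq_ne_xi_of_Q8_times_C2 :
    (phiExample 1 = 1 ∧
      ∀ g : QuaternionGroup 2 × Multiplicative (ZMod 2), ∀ s ∈ SQ8 ∪ SQ8 * SQ8,
        phiExample (g * s) = phiExample g * s ∨
          phiExample (g * s) = phiExample g * s⁻¹) ∧
    ¬ (phiExample 1 = 1 ∧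
      ∀ g h : QuaternionGroup 2 × Multiplicative (ZMod 2),
        phiExample (g * h) = phiExample g * h ∨
          phiExample (g * h) = phiExample g * h⁻¹) ∧
    ({φ : Equiv.Perm (QuaternionGroup 2 × Multiplicative (ZMod 2)) | φ 1 = 1 ∧
        ∀ g : QuaternionGroup 2 × Multiplicative (ZMod 2), ∀ s ∈ SQ8 ∪ SQ8 * SQ8,
          φ (g * s) = φ g * s ∨ φ (g * s) = φ g * s⁻¹}
      ≠ {φ : Equiv.Perm (QuaternionGroup 2 × Multiplicative (ZMod 2)) | φ 1 = 1 ∧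
          ∀ g h : QuaternionGroup 2 × Multiplicative (ZMod 2),
            φ (g * h) = φ g * h ∨ φ (g * h) = φ g * h⁻¹}) := by
  have key : ∀ g s : QuaternionGroup 2 × Multiplicative (ZMod 2),
      (s.2 = Multiplicative.ofAdd 0 ∨ (s.1 ≠ .a 0 ∧ s.1 ≠ .a 2)) →
      (phiExample (g * s) = phiExample g * s ∨
        phiExample (g * s) = phiExample g * s⁻¹) := by decide
  have h1 : phiExample 1 = 1 := by decide
  have h2 : ∀ g : QuaternionGroup 2 × Multiplicative (ZMod 2), ∀ s ∈ SQ8 ∪ SQ8 * SQ8,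
      phiExample (g * s) = phiExample g * s ∨
        phiExample (g * s) = phiExample g * s⁻¹ := by
    rintro g s (⟨hs2, hs1⟩ | ⟨a, ha, b, hb, rfl⟩)
    · refine key g s (Or.inr ⟨?_, ?_⟩) <;>
        rcases hs1 with h | h | h | h | h | h <;> rw [h] <;> decide
    · refine key g (a * b) (Or.inl ?_)
      show a.2 * b.2 = _
      rw [ha.1, hb.1]; decide
  have h3 : ¬ (phiExample 1 = 1 ∧
      ∀ g h : QuaternionGroup 2 × Multiplicative (ZMod 2),
        phiExample (g * h) = phiExample g * h ∨
          phiExample (g * h) = phiExample g * h⁻¹) := by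
    rintro ⟨-, H⟩
    have := H (.a 1, Multiplicative.ofAdd 0) (1, Multiplicative.ofAdd 1)
    revert this; decide
  refine ⟨⟨h1, h2⟩, h3, fun heq => h3 ?_⟩
  have : phiExample ∈ {φ : Equiv.Perm (QuaternionGroup 2 × Multiplicative (ZMod 2)) | φ 1 = 1 ∧
      ∀ g : QuaternionGroup 2 × Multiplicative (ZMod 2), ∀ s ∈ SQ8 ∪ SQ8 * SQ8,
        φ (g * s) = φ g * s ∨ φ (g * s) = φ g * s⁻¹} := ⟨h1, h2⟩
  rw [heq] at this
  exact this
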